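/- The numbers √2 and 3 − √2 are PGL₂(ℤ)-equivalent (indeed (2·√2 + 1)/(√2 + 1) = 3 − √2), but √2/2 and (3 − √2)/2 are not PGL₂(ℤ)-equivalent: there do not exist integers i, j, k, l with |i·l − j·k| = 1 and (i·(√2/2) + j)/(k·(√2/2) + l) = (3 − √2)/2. -/

import Mathlib

/-- Two irrational reals are `PGL₂(ℤ)`-equivalent when related by an integral
fractional linear transformation of determinant `±1`. -/
def PGL2ZEquiv (x y : ℝ) : Prop :=
  ∃ i j k l : ℤ, |i * l - j * k| = 1 ∧
    ((i : ℝ) * x + (j : ℝ)) / ((k : ℝ) * x + (l : ℝ)) = y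

/-- `√2` and `3 - √2` are `PGL₂(ℤ)`-equivalent (indeed `(2√2+1)/(√2+1) = 3-√2`),
but `√2/2` and `(3-√2)/2` are not `PGL₂(ℤ)`-equivalent. -/
theorem stmt_11 :
    (2 * Real.sqrt 2 + 1) / (Real.sqrt 2 + 1) = 3 - Real.sqrt 2 ∧
    PGL2ZEquiv (Real.sqrt 2) (3 - Real.sqrt 2) ∧
    ¬ PGL2ZEquiv (Real.sqrt 2 / 2) ((3 - Real.sqrt 2) / 2) := by
  have hs2 : Real.sqrt 2 ^ 2 = 2 := Real.sq_sqrt (by norm_num)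
  have hs0 : (0:ℝ) ≤ Real.sqrt 2 := Real.sqrt_nonneg 2
  have hirr := irrational_sqrt_two
  have hden : Real.sqrt 2 + 1 ≠ 0 := by nlinarith
  have h1 : (2 * Real.sqrt 2 + 1) / (Real.sqrt 2 + 1) = 3 - Real.sqrt 2 := by
    field_simp
    nlinarith
  refine ⟨h1, ⟨2, 1, 1, 1, by norm_num, by push_cast; simpa using h1⟩, ?_⟩
  rintro ⟨i, j, k, l, habs, heq⟩
  set s := Real.sqrt 2 with hsdef
  -- denominator nonzero
  have hdne : (k:ℝ) * (s/2) + (l:ℝ) ≠ 0 := by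
    intro h0
    rw [h0, div_zero] at heq
    nlinarith [heq]
  have heq2 : (i:ℝ) * (s/2) + j = (3 - s)/2 * ((k:ℝ) * (s/2) + l) := by
    rw [div_eq_iff hdne] at heq
    linarith [heq]
  -- rearrange to (2i + 2l - 3k) * s = 6l - 2k - 4j
  have hkey : ((2*i + 2*l - 3*k : ℤ) : ℝ) * s = ((6*l - 2*k - 4*j : ℤ) : ℝ) := by
    push_cast
    linear_combination 4*heq2 - (k:ℝ)*hs2
  have hc : (2*i + 2*l - 3*k : ℤ) = 0 := by
    by_contra hc0
    have hcr : ((2*i + 2*l - 3*k : ℤ) : ℝ) ≠ 0 := Int.cast_ne_zero.mpr hc0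
    apply hirr
    refine ⟨((6*l - 2*k - 4*j : ℤ) : ℚ) / ((2*i + 2*l - 3*k : ℤ) : ℚ), ?_⟩
    have hcr' : (2*(i:ℝ) + 2*l - 3*k) ≠ 0 := by push_cast at hcr; exact hcr
    push_cast at hkey ⊢
    rw [div_eq_iff hcr']
    linear_combination -hkey
  have hc2 : (6*l - 2*k - 4*j : ℤ) = 0 := by
    have : ((6*l - 2*k - 4*j : ℤ) : ℝ) = 0 := by
      rw [← hkey, hc]; push_cast; ring
    exact_mod_cast this
  -- so 3k = 2i + 2l and 3l = k + 2j
  obtain ⟨m, hm⟩ : ∃ m, k = 2*m := ⟨k/2, by omega⟩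
  obtain ⟨n, hn⟩ : ∃ n, l = 2*n := ⟨l/2, by omega⟩
  have hi : i = 3*m - 2*n := by omega
  have hj : j = 3*n - m := by omega
  have hdet : i*l - j*k = 2*(m^2 - 2*n^2) := by subst hi hj hm hn; ring
  rw [hdet] at habs
  rcases abs_eq (by norm_num : (0:ℤ) ≤ 1) |>.mp habs with h | h <;> omega
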